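/- Suppose functions Z̆_N(v_1,…,v_N; w_1,…,w_N), N ≥ 1, satisfy: (1) symmetry in w_1,…,w_N; (2) each Z̆_N is a trigonometric polynomial of degree at most N-1 in v_N (i.e. a linear combination of e^{kv_N} for |k| ≤ N-1 with k ≡ N-1 mod 2); (3) the recursion Z̆_N|_{v_N=w_N-γ} = [γ]∏_{i=1}^{N-1}[v_i-w_N][w_N-w_i-γ] · Z̆_{N-1}; and (4) Z̆_1 = [γ]. Then the Z̆_N are uniquely determined: any two families satisfying (1)–(4) coincide for all N, provided w_1-γ,…,w_N-γ are pairwise distinct values for the interpolation. -/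

import Mathlib

open Finset

/-- Uniqueness of the domain wall partition function: any two families of functions
satisfying the four Korepin conditions (symmetry in `w`, trigonometric polynomiality of
degree `N-1` in `v_N`, the recursion at `v_N = w_N - γ`, and the initial condition
`Z₁ = [γ]`) coincide for all `N ≥ 1`, provided the interpolation points `w_i - γ` are
pairwise distinct (mod `πi`). -/
theorem korepin_uniqueness (γ : ℂ) (hγ : Complex.sinh γ ≠ 0)
    (Z Z' : (N : ℕ) → (Fin N → ℂ) → (Fin N → ℂ) → ℂ)
    -- condition 1: symmetry in the `w` variables
    (hsym : ∀ (N : ℕ) (v w : Fin N → ℂ) (σ : Equiv.Perm (Fin N)), Z N v (w ∘ σ) = Z N v w)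
    (hsym' : ∀ (N : ℕ) (v w : Fin N → ℂ) (σ : Equiv.Perm (Fin N)), Z' N v (w ∘ σ) = Z' N v w)
    -- condition 2: trigonometric polynomial of degree `N-1` in the last `v` variable,
    -- with exponents `k ≡ N-1 (mod 2)`, `|k| ≤ N-1`
    (hdeg : ∀ (N : ℕ) (v w : Fin (N + 1) → ℂ), ∃ c : Fin (N + 1) → ℂ, ∀ x : ℂ,
      Z (N + 1) (Function.update v (Fin.last N) x) w =
        ∑ k, c k * Complex.exp (((N : ℂ) - 2 * ((k : ℕ) : ℂ)) * x))
    (hdeg' : ∀ (N : ℕ) (v w : Fin (N + 1) → ℂ), ∃ c : Fin (N + 1) → ℂ, ∀ x : ℂ,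
      Z' (N + 1) (Function.update v (Fin.last N) x) w =
        ∑ k, c k * Complex.exp (((N : ℂ) - 2 * ((k : ℕ) : ℂ)) * x))
    -- condition 3: the Korepin recursion
    (hrec : ∀ (N : ℕ) (v w : Fin (N + 1) → ℂ),
      Z (N + 1) (Function.update v (Fin.last N) (w (Fin.last N) - γ)) w =
        Complex.sinh γ *
          (∏ i : Fin N, Complex.sinh (v i.castSucc - w (Fin.last N)) *
            Complex.sinh (w (Fin.last N) - w i.castSucc - γ)) *
          Z N (v ∘ Fin.castSucc) (w ∘ Fin.castSucc))
    (hrec' : ∀ (N : ℕ) (v w : Fin (N + 1) → ℂ),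
      Z' (N + 1) (Function.update v (Fin.last N) (w (Fin.last N) - γ)) w =
        Complex.sinh γ *
          (∏ i : Fin N, Complex.sinh (v i.castSucc - w (Fin.last N)) *
            Complex.sinh (w (Fin.last N) - w i.castSucc - γ)) *
          Z' N (v ∘ Fin.castSucc) (w ∘ Fin.castSucc))
    -- condition 4: the initial condition
    (hbase : ∀ v w : Fin 1 → ℂ, Z 1 v w = Complex.sinh γ)
    (hbase' : ∀ v w : Fin 1 → ℂ, Z' 1 v w = Complex.sinh γ) :
    ∀ (N : ℕ), 1 ≤ N → ∀ (v w : Fin N → ℂ),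
      (∀ i j, i ≠ j →
        Complex.exp (2 * (w i - γ)) ≠ Complex.exp (2 * (w j - γ))) →
      Z N v w = Z' N v w := by
  suffices key : ∀ n : ℕ, ∀ v w : Fin (n + 1) → ℂ,
      (∀ i j, i ≠ j →
        Complex.exp (2 * (w i - γ)) ≠ Complex.exp (2 * (w j - γ))) →
      Z (n + 1) v w = Z' (n + 1) v w by
    intro N hN v w hw
    obtain ⟨n, rfl⟩ := Nat.exists_eq_succ_of_ne_zero (Nat.one_le_iff_ne_zero.mp hN)
    exact key n v w hw
  intro n
  induction n with
  | zero => intro v w _; rw [hbase, hbase']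
  | succ m ih =>
    intro v w hw
    obtain ⟨c, hc⟩ := hdeg (m + 1) v w
    obtain ⟨c', hc'⟩ := hdeg' (m + 1) v w
    set p : Polynomial ℂ :=
      ∑ k : Fin (m + 2), Polynomial.C (c k - c' k) * Polynomial.X ^ (m + 1 - (k : ℕ)) with hp_def
    have heval : ∀ x : ℂ,
        Z (m + 2) (Function.update v (Fin.last (m + 1)) x) w -
          Z' (m + 2) (Function.update v (Fin.last (m + 1)) x) w =
        Complex.exp (-(((m : ℂ) + 1)) * x) * p.eval (Complex.exp (2 * x)) := by
      intro x
      rw [hc x, hc' x, hp_def, Polynomial.eval_finset_sum, Finset.mul_sum, ← Finset.sum_sub_distrib]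
      refine Finset.sum_congr rfl fun k _ => ?_
      have hk : (k : ℕ) ≤ m + 1 := Nat.lt_succ_iff.mp k.isLt
      rw [Polynomial.eval_mul, Polynomial.eval_C, Polynomial.eval_pow, Polynomial.eval_X,
        ← Complex.exp_nat_mul, Nat.cast_sub hk]
      have hE : Complex.exp (-(((m : ℂ) + 1)) * x) *
          Complex.exp ((((m + 1 : ℕ) : ℂ) - ((k : ℕ) : ℂ)) * (2 * x)) =
          Complex.exp ((((m + 1 : ℕ) : ℂ) - 2 * ((k : ℕ) : ℂ)) * x) := by
        rw [← Complex.exp_add]; congr 1; push_cast; ring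
      linear_combination (c' k - c k) * hE
    have hroot : ∀ j : Fin (m + 2), p.eval (Complex.exp (2 * (w j - γ))) = 0 := by
      intro j
      set σ : Equiv.Perm (Fin (m + 2)) := Equiv.swap j (Fin.last (m + 1)) with hσ
      have hσlast : (w ∘ σ) (Fin.last (m + 1)) = w j := by
        simp [hσ, Equiv.swap_apply_right]
      have hZ := hrec (m + 1) v (w ∘ σ)
      have hZ' := hrec' (m + 1) v (w ∘ σ)
      rw [hsym (m + 2) _ w σ] at hZ
      rw [hsym' (m + 2) _ w σ] at hZ'
      rw [hσlast] at hZ hZ'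
      have hdist : ∀ i j' : Fin (m + 1), i ≠ j' →
          Complex.exp (2 * (((w ∘ σ) ∘ Fin.castSucc) i - γ)) ≠
            Complex.exp (2 * (((w ∘ σ) ∘ Fin.castSucc) j' - γ)) := by
        intro i j' hij
        exact hw _ _ (fun h => hij (Fin.castSucc_injective _ (σ.injective h)))
      have hih := ih (v ∘ Fin.castSucc) ((w ∘ σ) ∘ Fin.castSucc) hdist
      have hZZ' : Z (m + 2) (Function.update v (Fin.last (m + 1)) (w j - γ)) w =
          Z' (m + 2) (Function.update v (Fin.last (m + 1)) (w j - γ)) w := by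
        rw [hZ, hZ', hih]
      have h0 := heval (w j - γ)
      rw [hZZ', sub_self] at h0
      have hne : Complex.exp (-(((m : ℂ) + 1)) * (w j - γ)) ≠ 0 := Complex.exp_ne_zero _
      exact (mul_eq_zero.mp h0.symm).resolve_left hne
    have hinj : Function.Injective fun j : Fin (m + 2) => Complex.exp (2 * (w j - γ)) := by
      intro i j h
      by_contra hij
      exact hw i j hij h
    have hdegp : p.natDegree ≤ m + 1 := by
      refine Polynomial.natDegree_sum_le_of_forall_le _ _ fun k _ => ?_
      refine le_trans (Polynomial.natDegree_C_mul_le _ _) ?_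
      rw [Polynomial.natDegree_X_pow]
      omega
    have hp0 : p = 0 := by
      refine Polynomial.eq_zero_of_natDegree_lt_card_of_eval_eq_zero p hinj hroot ?_
      exact lt_of_le_of_lt hdegp (by simp)
    have hfin := heval (v (Fin.last (m + 1)))
    rw [Function.update_eq_self, hp0] at hfin
    simp only [Polynomial.eval_zero, mul_zero] at hfin
    exact sub_eq_zero.mp hfin
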